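/- Let n, δ, l be integers with 2 ≤ δ ≤ n − 3 and 1 ≤ l ≤ δ − 1. Then l·f(n−1, n−2) − l·f(n−1, δ) − (δ − l)·f(n−2, δ) < 0, i.e., l·f(n−1,n−2) < l·f(n−1,δ) + (δ−l)·f(n−2,δ). -/

import Mathlib

/-- `f a b = |a² − b²| / (√2 + 2√(a² + b²))`. -/
noncomputable def f (a b : ℝ) : ℝ :=
  |a ^ 2 - b ^ 2| / (Real.sqrt 2 + 2 * Real.sqrt (a ^ 2 + b ^ 2))

/-- For integers `2 ≤ δ ≤ n − 3` and `1 ≤ l ≤ δ − 1`,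
`l·f(n−1,n−2) < l·f(n−1,δ) + (δ−l)·f(n−2,δ)`. -/
theorem f_combination_lt (n δ l : ℕ) (hδ : 2 ≤ δ) (hδn : δ + 3 ≤ n)
    (hl : 1 ≤ l) (hlδ : l + 1 ≤ δ) :
    (l : ℝ) * f ((n : ℝ) - 1) ((n : ℝ) - 2) <
      (l : ℝ) * f ((n : ℝ) - 1) (δ : ℝ) + ((δ : ℝ) - (l : ℝ)) * f ((n : ℝ) - 2) (δ : ℝ) := by
  have hD : (2:ℝ) ≤ (δ:ℝ) := by exact_mod_cast hδ
  have hN : (δ:ℝ) + 3 ≤ (n:ℝ) := by exact_mod_cast hδn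
  have hL1 : (1:ℝ) ≤ (l:ℝ) := by exact_mod_cast hl
  have hLD : (l:ℝ) + 1 ≤ (δ:ℝ) := by exact_mod_cast hlδ
  set N : ℝ := (n:ℝ)
  set D : ℝ := (δ:ℝ)
  have hN5 : (5:ℝ) ≤ N := by linarith
  have hsq1 : Real.sqrt ((N-1)^2 + D^2) ≤ Real.sqrt ((N-1)^2 + (N-2)^2) := by
    apply Real.sqrt_le_sqrt; nlinarith
  have h1 : f (N-1) (N-2) < f (N-1) D := by
    unfold f
    rw [abs_of_nonneg (by nlinarith : (0:ℝ) ≤ (N-1)^2 - (N-2)^2),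
        abs_of_nonneg (by nlinarith : (0:ℝ) ≤ (N-1)^2 - D^2)]
    have hden2 : (0:ℝ) < Real.sqrt 2 + 2 * Real.sqrt ((N-1)^2 + (N-2)^2) := by positivity
    have hden1 : (0:ℝ) < Real.sqrt 2 + 2 * Real.sqrt ((N-1)^2 + D^2) := by positivity
    apply div_lt_div₀ (by nlinarith) (by linarith) (by nlinarith) hden1
  have h2 : 0 < f (N-2) D := by
    unfold f
    apply div_pos
    · rw [abs_pos]; nlinarith
    · positivity
  have hl0 : (0:ℝ) < (l:ℝ) := by linarith
  have hdl : (0:ℝ) < D - (l:ℝ) := by linarith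
  nlinarith [mul_lt_mul_of_pos_left h1 hl0, mul_pos hdl h2]
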